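/- Let n ≥ 2, let W ⊆ ℝ^{n−1} be open, let f : W → ℝ be C², and let y₀ ∈ W with q = (y₀, f(y₀)) ∈ ℝⁿ. Suppose u : ℝⁿ → ℝ is C² on an open neighborhood of q and satisfies the Neumann condition −Σ_{i=1}^{n−1} ∂ᵢf(y) · ∂ᵢu(y, f(y)) + ∂ₙu(y, f(y)) = 0 for all y in a neighborhood of y₀ in W (i.e., ⟨∇u, ν⟩ = 0 along the graph of f, where ν = (1 + ‖∇f‖²)^{−1/2}(−∇f, 1) is the upward unit normal). Then the derivative of ‖∇u‖² at q in the direction of the unit normal ν(y₀) satisfies ∂_ν(‖∇u‖²)(q) = 2 Σ_{i,j=1}^{n−1} ( ∂ᵢ∂ⱼf(y₀)/√(1 + ‖∇f(y₀)‖²) − ∂ᵢf(y₀)∂ⱼf(y₀) ) ∂ᵢu(q) ∂ⱼu(q) + 2 (∂ₙu(q))². -/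

import Mathlib

open scoped RealInnerProductSpace

/-- The point `(y, f(y)) ∈ ℝ^{m+1}` on the graph of `f : ℝ^m → ℝ`. -/
noncomputable def graphPoint (m : ℕ) (f : EuclideanSpace ℝ (Fin m) → ℝ)
    (y : EuclideanSpace ℝ (Fin m)) : EuclideanSpace ℝ (Fin (m + 1)) :=
  (WithLp.equiv 2 (∀ _ : Fin (m + 1), ℝ)).symm
    (Fin.snoc (α := fun _ => ℝ) (fun j : Fin m => y j) (f y))

/-- The vector `(−v, 1) ∈ ℝ^{m+1}` for `v ∈ ℝ^m` (an un-normalized upward normal). -/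
noncomputable def upNormal (m : ℕ) (v : EuclideanSpace ℝ (Fin m)) :
    EuclideanSpace ℝ (Fin (m + 1)) :=
  (WithLp.equiv 2 (∀ _ : Fin (m + 1), ℝ)).symm
    (Fin.snoc (α := fun _ => ℝ) (fun j : Fin m => -(v j)) (1 : ℝ))

/-! ### Auxiliary lemmas -/

lemma aux_grad_apply {k : ℕ} (u : EuclideanSpace ℝ (Fin k) → ℝ) (x : EuclideanSpace ℝ (Fin k))
    (i : Fin k) : gradient u x i = fderiv ℝ u x (EuclideanSpace.single i 1) := by
  have : ⟪gradient u x, EuclideanSpace.single i (1:ℝ)⟫ =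
      fderiv ℝ u x (EuclideanSpace.single i 1) := by
    rw [gradient, ← InnerProductSpace.toDual_apply_apply, LinearIsometryEquiv.apply_symm_apply]
  rw [← this, EuclideanSpace.inner_single_right]
  simp

lemma aux_norm_sq_eq {k : ℕ} (g : EuclideanSpace ℝ (Fin k)) : ‖g‖ ^ 2 = ∑ i, (g i) ^ 2 := by
  rw [EuclideanSpace.norm_eq, Real.sq_sqrt (by positivity)]
  simp [sq_abs]

lemma aux_euclid_decomp {k : ℕ} (v : EuclideanSpace ℝ (Fin k)) :
    v = ∑ i, v i • EuclideanSpace.single i (1 : ℝ) := by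
  have h := (PiLp.basisFun 2 ℝ (Fin k)).sum_repr v
  conv_lhs => rw [← h]
  refine Finset.sum_congr rfl fun i _ => ?_
  rw [PiLp.basisFun_repr, PiLp.basisFun_apply]

/-- Derivative of the graph map. -/
noncomputable def graphDeriv (m : ℕ) (L : EuclideanSpace ℝ (Fin m) →L[ℝ] ℝ) :
    EuclideanSpace ℝ (Fin m) →L[ℝ] EuclideanSpace ℝ (Fin (m + 1)) :=
  ((EuclideanSpace.equiv (Fin (m + 1)) ℝ).symm.toContinuousLinearMap).comp
    (ContinuousLinearMap.pi
      (Fin.lastCases (motive := fun _ => EuclideanSpace ℝ (Fin m) →L[ℝ] ℝ) L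
        fun j => EuclideanSpace.proj j))

lemma graphDeriv_apply {m : ℕ} (L : EuclideanSpace ℝ (Fin m) →L[ℝ] ℝ)
    (e : EuclideanSpace ℝ (Fin m)) (k : Fin (m + 1)) :
    graphDeriv m L e k =
      Fin.lastCases (motive := fun _ => ℝ) (L e) (fun j => e j) k := by
  induction k using Fin.lastCases with
  | last => simp [graphDeriv]
  | cast j => simp [graphDeriv]

lemma hasFDerivAt_graphPoint {m : ℕ} {f : EuclideanSpace ℝ (Fin m) → ℝ}
    {y₀ : EuclideanSpace ℝ (Fin m)} (hf : DifferentiableAt ℝ f y₀) :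
    HasFDerivAt (graphPoint m f) (graphDeriv m (fderiv ℝ f y₀)) y₀ := by
  have h1 : HasFDerivAt
      (fun y : EuclideanSpace ℝ (Fin m) =>
        (Fin.snoc (α := fun _ => ℝ) (fun j : Fin m => y j) (f y) : Fin (m + 1) → ℝ))
      (ContinuousLinearMap.pi
        (Fin.lastCases (motive := fun _ => EuclideanSpace ℝ (Fin m) →L[ℝ] ℝ)
          (fderiv ℝ f y₀) fun j => EuclideanSpace.proj j)) y₀ := by
    apply hasFDerivAt_pi''
    intro k
    induction k using Fin.lastCases with
    | last =>
      simpa [ContinuousLinearMap.proj_pi] using hf.hasFDerivAt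
    | cast j =>
      simpa [ContinuousLinearMap.proj_pi] using
        (EuclideanSpace.proj (𝕜 := ℝ) j).hasFDerivAt
  exact ((EuclideanSpace.equiv (Fin (m + 1)) ℝ).symm.toContinuousLinearMap).hasFDerivAt.comp y₀ h1

lemma graphDeriv_single {m : ℕ} (L : EuclideanSpace ℝ (Fin m) →L[ℝ] ℝ) (j : Fin m) :
    graphDeriv m L (EuclideanSpace.single j 1) =
      EuclideanSpace.single j.castSucc 1 +
        (L (EuclideanSpace.single j 1)) • EuclideanSpace.single (Fin.last m) 1 := by
  ext k
  rw [graphDeriv_apply]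
  induction k using Fin.lastCases with
  | last =>
    simp [EuclideanSpace.single_apply, (Fin.castSucc_lt_last j).ne, (Fin.castSucc_lt_last j).ne']
  | cast i =>
    simp [EuclideanSpace.single_apply, (Fin.castSucc_lt_last i).ne, Fin.castSucc_inj]

lemma fderiv_grad_norm_sq {k : ℕ} {u : EuclideanSpace ℝ (Fin k) → ℝ}
    {q : EuclideanSpace ℝ (Fin k)} (hu : ContDiffAt ℝ 2 u q) (w : EuclideanSpace ℝ (Fin k)) :
    fderiv ℝ (fun x => ‖gradient u x‖ ^ 2) q w =
      ∑ l, 2 * fderiv ℝ u q (EuclideanSpace.single l 1) *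
        fderiv ℝ (fderiv ℝ u) q w (EuclideanSpace.single l 1) := by
  have hDu : ContDiffAt ℝ 1 (fderiv ℝ u) q := hu.fderiv_right (by norm_num)
  have hB : HasFDerivAt (fderiv ℝ u) (fderiv ℝ (fderiv ℝ u) q) q :=
    (hDu.differentiableAt one_ne_zero).hasFDerivAt
  have hφ : ∀ v, HasFDerivAt (fun x => fderiv ℝ u x v)
      ((ContinuousLinearMap.apply ℝ ℝ v).comp (fderiv ℝ (fderiv ℝ u) q)) q :=
    fun v => (ContinuousLinearMap.apply ℝ ℝ v).hasFDerivAt.comp q hB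
  have hsum : HasFDerivAt (fun x => ∑ l, fderiv ℝ u x (EuclideanSpace.single l 1) *
        fderiv ℝ u x (EuclideanSpace.single l 1))
      (∑ l, (fderiv ℝ u q (EuclideanSpace.single l 1) •
          ((ContinuousLinearMap.apply ℝ ℝ (EuclideanSpace.single l 1)).comp
            (fderiv ℝ (fderiv ℝ u) q)) +
        fderiv ℝ u q (EuclideanSpace.single l 1) •
          ((ContinuousLinearMap.apply ℝ ℝ (EuclideanSpace.single l 1)).comp
            (fderiv ℝ (fderiv ℝ u) q)))) q :=
    HasFDerivAt.fun_sum fun l _ => (hφ _).fun_mul (hφ _)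
  have hfe : (fun x => ‖gradient u x‖ ^ 2) = fun x =>
      ∑ l, fderiv ℝ u x (EuclideanSpace.single l 1) *
        fderiv ℝ u x (EuclideanSpace.single l 1) := by
    funext x
    rw [aux_norm_sq_eq]
    exact Finset.sum_congr rfl fun l _ => by rw [aux_grad_apply, pow_two]
  rw [hfe, hsum.fderiv]
  rw [ContinuousLinearMap.sum_apply]
  exact Finset.sum_congr rfl fun l _ => by
    simp [ContinuousLinearMap.add_apply, ContinuousLinearMap.smul_apply]
    ring

lemma key_algebra (m : ℕ) (s : ℝ) (P Uc : Fin m → ℝ) (Un : ℝ) (Aij : Fin m → Fin m → ℝ)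
    (b : Fin (m + 1) → Fin (m + 1) → ℝ)
    (hbsym : ∀ k l, b k l = b l k)
    (hUn : Un = ∑ i, P i * Uc i)
    (hEq : ∀ j, (0 : ℝ) =
      -(∑ i, (P i * (b j.castSucc i.castSucc + P j * b (Fin.last m) i.castSucc) +
          Uc i * Aij j i)) +
        (b j.castSucc (Fin.last m) + P j * b (Fin.last m) (Fin.last m)))
    (U' : Fin (m + 1) → ℝ)
    (hU'c : ∀ i : Fin m, U' i.castSucc = Uc i) (hU'l : U' (Fin.last m) = Un) :
    ∑ l, 2 * U' l * (s⁻¹ * (-(∑ i, P i * b i.castSucc l) + b (Fin.last m) l)) =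
      2 * ∑ i, ∑ j, (Aij i j / s - P i * P j) * Uc i * Uc j + 2 * Un ^ 2 := by
  set S1 : Fin m → ℝ := fun j => ∑ i, P i * b i.castSucc j.castSucc with hS1
  set S2 : ℝ := ∑ i, P i * b i.castSucc (Fin.last m) with hS2
  set T : Fin m → ℝ := fun j => ∑ i, Uc i * Aij j i with hT
  have hEq' : ∀ j, (0 : ℝ) = -(S1 j) - P j * S2 - T j
      + b j.castSucc (Fin.last m) + P j * b (Fin.last m) (Fin.last m) := by
    intro j
    have h := hEq j
    have e1 : ∑ i, (P i * (b j.castSucc i.castSucc + P j * b (Fin.last m) i.castSucc) +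
        Uc i * Aij j i) = S1 j + P j * S2 + T j := by
      rw [hS1, hS2, hT]
      rw [Finset.sum_add_distrib]
      congr 1
      · have : ∀ i : Fin m, P i * (b j.castSucc i.castSucc + P j * b (Fin.last m) i.castSucc)
            = P i * b i.castSucc j.castSucc + P j * (P i * b i.castSucc (Fin.last m)) := by
          intro i
          rw [hbsym j.castSucc i.castSucc, hbsym (Fin.last m) i.castSucc]
          ring
        rw [Finset.sum_congr rfl fun i _ => this i, Finset.sum_add_distrib, ← Finset.mul_sum]
    rw [e1] at h
    linarith [h]
  have key : ∀ j, 2 * Uc j * (s⁻¹ * (-(S1 j) + b (Fin.last m) j.castSucc)) +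
      2 * (P j * Uc j) * (s⁻¹ * (-S2 + b (Fin.last m) (Fin.last m))) =
      2 * s⁻¹ * Uc j * T j := by
    intro j
    rw [hbsym (Fin.last m) j.castSucc]
    linear_combination (-(2 * s⁻¹ * Uc j)) * hEq' j
  rw [Fin.sum_univ_castSucc]
  simp only [hU'c, hU'l]
  have e2 : 2 * Un * (s⁻¹ * (-S2 + b (Fin.last m) (Fin.last m))) =
      ∑ j, 2 * (P j * Uc j) * (s⁻¹ * (-S2 + b (Fin.last m) (Fin.last m))) := by
    rw [hUn, Finset.mul_sum, Finset.sum_mul]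
  rw [e2, ← Finset.sum_add_distrib]
  have e3 : ∀ j, 2 * Uc j * (s⁻¹ * (-(S1 j) + b (Fin.last m) j.castSucc)) +
      2 * (P j * Uc j) * (s⁻¹ * (-S2 + b (Fin.last m) (Fin.last m))) =
      ∑ i, 2 * (Aij j i / s) * Uc j * Uc i := by
    intro j
    rw [key j, hT, Finset.mul_sum]
    exact Finset.sum_congr rfl fun i _ => by
      rw [div_eq_mul_inv]; ring
  rw [Finset.sum_congr rfl fun j _ => e3 j]
  have e4 : Un ^ 2 = ∑ i, ∑ j, (P i * Uc i) * (P j * Uc j) := by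
    rw [hUn, ← Finset.sum_mul_sum]
    exact (pow_two _)
  rw [e4, Finset.mul_sum, Finset.mul_sum, ← Finset.sum_add_distrib]
  refine Finset.sum_congr rfl fun j _ => ?_
  rw [Finset.mul_sum, Finset.mul_sum, ← Finset.sum_add_distrib]
  exact Finset.sum_congr rfl fun i _ => by ring

theorem normal_deriv_grad_sq_on_graph (m : ℕ) (hm : 1 ≤ m)
    (W : Set (EuclideanSpace ℝ (Fin m))) (hW : IsOpen W)
    (f : EuclideanSpace ℝ (Fin m) → ℝ) (hf : ContDiffOn ℝ 2 f W)
    (y₀ : EuclideanSpace ℝ (Fin m)) (hy₀ : y₀ ∈ W)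
    (u : EuclideanSpace ℝ (Fin (m + 1)) → ℝ)
    (q : EuclideanSpace ℝ (Fin (m + 1))) (hq : q = graphPoint m f y₀)
    (U : Set (EuclideanSpace ℝ (Fin (m + 1)))) (hU : IsOpen U) (hqU : q ∈ U)
    (hu : ContDiffOn ℝ 2 u U)
    (hNeu : ∀ᶠ y in nhdsWithin y₀ W,
      -(∑ i : Fin m, fderiv ℝ f y (EuclideanSpace.single i (1 : ℝ)) *
          fderiv ℝ u (graphPoint m f y) (EuclideanSpace.single (Fin.castSucc i) (1 : ℝ))) +
        fderiv ℝ u (graphPoint m f y) (EuclideanSpace.single (Fin.last m) (1 : ℝ)) = 0) :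
    fderiv ℝ (fun x => ‖gradient u x‖ ^ 2) q
        ((Real.sqrt (1 + ‖gradient f y₀‖ ^ 2))⁻¹ • upNormal m (gradient f y₀)) =
      2 * ∑ i : Fin m, ∑ j : Fin m,
          ((fderiv ℝ (fun y => fderiv ℝ f y (EuclideanSpace.single j (1 : ℝ))) y₀
              (EuclideanSpace.single i (1 : ℝ))) / Real.sqrt (1 + ‖gradient f y₀‖ ^ 2) -
            fderiv ℝ f y₀ (EuclideanSpace.single i (1 : ℝ)) *
              fderiv ℝ f y₀ (EuclideanSpace.single j (1 : ℝ))) *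
          fderiv ℝ u q (EuclideanSpace.single (Fin.castSucc i) (1 : ℝ)) *
          fderiv ℝ u q (EuclideanSpace.single (Fin.castSucc j) (1 : ℝ)) +
        2 * (fderiv ℝ u q (EuclideanSpace.single (Fin.last m) (1 : ℝ))) ^ 2 := by
  subst hq
  have hf2 : ContDiffAt ℝ 2 f y₀ := hf.contDiffAt (hW.mem_nhds hy₀)
  have hu2 : ContDiffAt ℝ 2 u (graphPoint m f y₀) := hu.contDiffAt (hU.mem_nhds hqU)
  have hdf : DifferentiableAt ℝ f y₀ := hf2.differentiableAt (by norm_num)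
  set B := fderiv ℝ (fderiv ℝ u) (graphPoint m f y₀) with hBdef
  set A := fderiv ℝ (fderiv ℝ f) y₀ with hAdef
  have hDu : ContDiffAt ℝ 1 (fderiv ℝ u) (graphPoint m f y₀) := hu2.fderiv_right (by norm_num)
  have hDf : ContDiffAt ℝ 1 (fderiv ℝ f) y₀ := hf2.fderiv_right (by norm_num)
  have hBd : HasFDerivAt (fderiv ℝ u) B (graphPoint m f y₀) :=
    (hDu.differentiableAt one_ne_zero).hasFDerivAt
  have hAd : HasFDerivAt (fderiv ℝ f) A y₀ := (hDf.differentiableAt one_ne_zero).hasFDerivAt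
  have hφ : ∀ v, HasFDerivAt (fun x => fderiv ℝ u x v)
      ((ContinuousLinearMap.apply ℝ ℝ v).comp B) (graphPoint m f y₀) :=
    fun v => (ContinuousLinearMap.apply ℝ ℝ v).hasFDerivAt.comp _ hBd
  have hgj : ∀ v, HasFDerivAt (fun y => fderiv ℝ f y v)
      ((ContinuousLinearMap.apply ℝ ℝ v).comp A) y₀ :=
    fun v => (ContinuousLinearMap.apply ℝ ℝ v).hasFDerivAt.comp _ hAd
  have hG : HasFDerivAt (graphPoint m f) (graphDeriv m (fderiv ℝ f y₀)) y₀ :=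
    hasFDerivAt_graphPoint hdf
  have hh : ∀ k : Fin (m + 1),
      HasFDerivAt (fun y => fderiv ℝ u (graphPoint m f y) (EuclideanSpace.single k 1))
        (((ContinuousLinearMap.apply ℝ ℝ (EuclideanSpace.single k 1)).comp B).comp
          (graphDeriv m (fderiv ℝ f y₀))) y₀ :=
    fun k => (hφ (EuclideanSpace.single k 1)).comp y₀ hG
  have hNeu' : ∀ᶠ y in nhds y₀,
      -(∑ i : Fin m, fderiv ℝ f y (EuclideanSpace.single i (1 : ℝ)) *
          fderiv ℝ u (graphPoint m f y) (EuclideanSpace.single (Fin.castSucc i) (1 : ℝ))) +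
        fderiv ℝ u (graphPoint m f y) (EuclideanSpace.single (Fin.last m) (1 : ℝ)) = 0 := by
    rwa [nhdsWithin_eq_nhds.2 (hW.mem_nhds hy₀)] at hNeu
  have hEE : (fun y => -(∑ i : Fin m, fderiv ℝ f y (EuclideanSpace.single i (1 : ℝ)) *
          fderiv ℝ u (graphPoint m f y) (EuclideanSpace.single (Fin.castSucc i) (1 : ℝ))) +
        fderiv ℝ u (graphPoint m f y) (EuclideanSpace.single (Fin.last m) (1 : ℝ)))
      =ᶠ[nhds y₀] (fun _ => (0 : ℝ)) := hNeu'
  have hN : HasFDerivAt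
      (fun y => -(∑ i : Fin m, fderiv ℝ f y (EuclideanSpace.single i (1 : ℝ)) *
          fderiv ℝ u (graphPoint m f y) (EuclideanSpace.single (Fin.castSucc i) (1 : ℝ))) +
        fderiv ℝ u (graphPoint m f y) (EuclideanSpace.single (Fin.last m) (1 : ℝ)))
      (-(∑ i : Fin m,
          (fderiv ℝ f y₀ (EuclideanSpace.single i 1) •
            (((ContinuousLinearMap.apply ℝ ℝ
                (EuclideanSpace.single (Fin.castSucc i) 1)).comp B).comp
              (graphDeriv m (fderiv ℝ f y₀))) +
          fderiv ℝ u (graphPoint m f y₀) (EuclideanSpace.single (Fin.castSucc i) 1) •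
            ((ContinuousLinearMap.apply ℝ ℝ (EuclideanSpace.single i 1)).comp A))) +
        ((ContinuousLinearMap.apply ℝ ℝ (EuclideanSpace.single (Fin.last m) 1)).comp B).comp
          (graphDeriv m (fderiv ℝ f y₀))) y₀ :=
    ((HasFDerivAt.fun_sum fun i _ =>
      (hgj (EuclideanSpace.single i 1)).fun_mul (hh (Fin.castSucc i))).fun_neg).fun_add (hh (Fin.last m))
  have hLN0 : (-(∑ i : Fin m,
          (fderiv ℝ f y₀ (EuclideanSpace.single i 1) •
            (((ContinuousLinearMap.apply ℝ ℝ
                (EuclideanSpace.single (Fin.castSucc i) 1)).comp B).comp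
              (graphDeriv m (fderiv ℝ f y₀))) +
          fderiv ℝ u (graphPoint m f y₀) (EuclideanSpace.single (Fin.castSucc i) 1) •
            ((ContinuousLinearMap.apply ℝ ℝ (EuclideanSpace.single i 1)).comp A))) +
        ((ContinuousLinearMap.apply ℝ ℝ (EuclideanSpace.single (Fin.last m) 1)).comp B).comp
          (graphDeriv m (fderiv ℝ f y₀))) = 0 := by
    rw [← hN.fderiv, hEE.fderiv_eq]
    exact fderiv_const_apply 0
  -- second derivative matrix of f in statement form
  have hAij : ∀ i j : Fin m,
      fderiv ℝ (fun y => fderiv ℝ f y (EuclideanSpace.single j (1 : ℝ))) y₀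
        (EuclideanSpace.single i (1 : ℝ)) =
      A (EuclideanSpace.single i 1) (EuclideanSpace.single j 1) := by
    intro i j
    rw [(hgj (EuclideanSpace.single j 1)).fderiv]
    rfl
  have hbsym : ∀ k l : Fin (m + 1),
      B (EuclideanSpace.single k 1) (EuclideanSpace.single l 1) =
        B (EuclideanSpace.single l 1) (EuclideanSpace.single k 1) :=
    fun k l => hu2.isSymmSndFDerivAt (by simp) _ _
  have hBD : ∀ (j : Fin m) (l : Fin (m + 1)),
      B (graphDeriv m (fderiv ℝ f y₀) (EuclideanSpace.single j 1))
          (EuclideanSpace.single l 1) =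
        B (EuclideanSpace.single j.castSucc 1) (EuclideanSpace.single l 1) +
          fderiv ℝ f y₀ (EuclideanSpace.single j 1) *
            B (EuclideanSpace.single (Fin.last m) 1) (EuclideanSpace.single l 1) := by
    intro j l
    rw [graphDeriv_single, map_add, map_smul]
    simp
  have hUn : fderiv ℝ u (graphPoint m f y₀) (EuclideanSpace.single (Fin.last m) 1) =
      ∑ i : Fin m, fderiv ℝ f y₀ (EuclideanSpace.single i 1) *
        fderiv ℝ u (graphPoint m f y₀) (EuclideanSpace.single i.castSucc 1) := by
    have h0 := hNeu'.self_of_nhds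
    linarith [h0]
  have hEqj : ∀ j : Fin m, (0 : ℝ) =
      -(∑ i : Fin m, (fderiv ℝ f y₀ (EuclideanSpace.single i 1) *
          (B (EuclideanSpace.single j.castSucc 1) (EuclideanSpace.single i.castSucc 1) +
            fderiv ℝ f y₀ (EuclideanSpace.single j 1) *
              B (EuclideanSpace.single (Fin.last m) 1) (EuclideanSpace.single i.castSucc 1)) +
        fderiv ℝ u (graphPoint m f y₀) (EuclideanSpace.single i.castSucc 1) *
          fderiv ℝ (fun y => fderiv ℝ f y (EuclideanSpace.single i (1 : ℝ))) y₀
            (EuclideanSpace.single j (1 : ℝ)))) +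
      (B (EuclideanSpace.single j.castSucc 1) (EuclideanSpace.single (Fin.last m) 1) +
        fderiv ℝ f y₀ (EuclideanSpace.single j 1) *
          B (EuclideanSpace.single (Fin.last m) 1) (EuclideanSpace.single (Fin.last m) 1)) := by
    intro j
    have h1 := congrArg
      (fun L : EuclideanSpace ℝ (Fin m) →L[ℝ] ℝ => L (EuclideanSpace.single j 1)) hLN0
    simp only [ContinuousLinearMap.add_apply, ContinuousLinearMap.neg_apply,
      ContinuousLinearMap.coe_sum', Finset.sum_apply, ContinuousLinearMap.smul_apply,
      ContinuousLinearMap.comp_apply, ContinuousLinearMap.apply_apply,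
      ContinuousLinearMap.zero_apply, smul_eq_mul] at h1
    simp only [hBD] at h1
    simp only [hAij] at h1 ⊢
    linarith [h1]
  have hν : ∀ l : Fin (m + 1),
      B ((Real.sqrt (1 + ‖gradient f y₀‖ ^ 2))⁻¹ • upNormal m (gradient f y₀))
          (EuclideanSpace.single l 1) =
        (Real.sqrt (1 + ‖gradient f y₀‖ ^ 2))⁻¹ *
          (-(∑ i : Fin m, fderiv ℝ f y₀ (EuclideanSpace.single i 1) *
              B (EuclideanSpace.single i.castSucc 1) (EuclideanSpace.single l 1)) +
            B (EuclideanSpace.single (Fin.last m) 1) (EuclideanSpace.single l 1)) := by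
    intro l
    rw [map_smul, ContinuousLinearMap.smul_apply, smul_eq_mul]
    congr 1
    conv_lhs => rw [aux_euclid_decomp (upNormal m (gradient f y₀))]
    rw [map_sum, ContinuousLinearMap.sum_apply]
    simp only [map_smul, ContinuousLinearMap.smul_apply, smul_eq_mul]
    rw [Fin.sum_univ_castSucc]
    have hc : ∀ i : Fin m, upNormal m (gradient f y₀) i.castSucc =
        -(fderiv ℝ f y₀ (EuclideanSpace.single i 1)) := by
      intro i
      simp [upNormal, aux_grad_apply]
    have hl : upNormal m (gradient f y₀) (Fin.last m) = 1 := by simp [upNormal]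
    rw [hl, one_mul, Finset.sum_congr rfl fun i _ => by rw [hc i]]
    congr 1
    rw [← Finset.sum_neg_distrib]
    exact Finset.sum_congr rfl fun i _ => (neg_mul _ _)
  rw [fderiv_grad_norm_sq hu2, ← hBdef]
  rw [Finset.sum_congr rfl fun l _ => by rw [hν l]]
  exact key_algebra m (Real.sqrt (1 + ‖gradient f y₀‖ ^ 2))
    (fun i => fderiv ℝ f y₀ (EuclideanSpace.single i 1))
    (fun i => fderiv ℝ u (graphPoint m f y₀) (EuclideanSpace.single i.castSucc 1))
    (fderiv ℝ u (graphPoint m f y₀) (EuclideanSpace.single (Fin.last m) 1))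
    (fun i j => fderiv ℝ (fun y => fderiv ℝ f y (EuclideanSpace.single j (1 : ℝ))) y₀
      (EuclideanSpace.single i (1 : ℝ)))
    (fun k l => B (EuclideanSpace.single k 1) (EuclideanSpace.single l 1))
    hbsym hUn hEqj
    (fun l => fderiv ℝ u (graphPoint m f y₀) (EuclideanSpace.single l 1))
    (fun i => rfl) rfl
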